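/- Suppose x* ∈ X and λ* ∈ ℝ^m with λ*_k ≥ 0 for all k satisfy the strong-duality identity inf_{x ∈ X} ( f(x) + Σ_{k=1}^m λ*_k g_k(x) ) = f(x*). Then under the virtual-queue update rule, for every t ≥ 1, Σ_{τ=0}^{t−1} f(x(τ)) ≥ t·f(x*) − ‖λ*‖·‖Q(t)‖, where ‖·‖ is the Euclidean norm on ℝ^m. -/

import Mathlib

/-- Objective lower bound from strong duality.  Indexing convention: `x 0` denotes
`x(−1)` and `x (τ+1)` denotes the iterate `x(τ)`, so `Q 0 k = max {0, −g_k(x(−1))}`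
and `Q (t+1) k = max {−g_k(x(t)), Q t k + g_k(x(t))}`.  Suppose `xstar ∈ X` and
`lam ≥ 0` satisfy the strong-duality identity
`inf_{x ∈ X} (f(x) + Σ_k lam_k g_k(x)) = f(xstar)` (stated as an `IsGLB`).  Then
for every `t ≥ 1`, `Σ_{τ=0}^{t−1} f(x(τ)) ≥ t·f(xstar) − ‖lam‖·‖Q(t)‖`. -/
theorem objective_lower_bound_from_strong_duality {n m : ℕ}
    (X : Set (EuclideanSpace ℝ (Fin n)))
    (f : EuclideanSpace ℝ (Fin n) → ℝ)
    (g : Fin m → EuclideanSpace ℝ (Fin n) → ℝ)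
    (x : ℕ → EuclideanSpace ℝ (Fin n)) (hx : ∀ t, x t ∈ X)
    (Q : ℕ → EuclideanSpace ℝ (Fin m))
    (hQ0 : ∀ k, Q 0 k = max 0 (-(g k (x 0))))
    (hQr : ∀ (t : ℕ) (k : Fin m),
      Q (t + 1) k = max (-(g k (x (t + 1)))) (Q t k + g k (x (t + 1))))
    (xstar : EuclideanSpace ℝ (Fin n)) (hxstar : xstar ∈ X)
    (lam : EuclideanSpace ℝ (Fin m)) (hlam : ∀ k, 0 ≤ lam k)
    (hduality : IsGLB ((fun z => f z + ∑ k, lam k * g k z) '' X) (f xstar)) :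
    ∀ t : ℕ, 1 ≤ t →
      (t : ℝ) * f xstar - ‖lam‖ * ‖Q t‖ ≤ ∑ τ ∈ Finset.range t, f (x (τ + 1)) := by
  -- Q is nonnegative
  have hQnn : ∀ t k, 0 ≤ Q t k := by
    intro t
    induction t with
    | zero => intro k; rw [hQ0]; exact le_max_left _ _
    | succ t ih =>
      intro k
      rw [hQr]
      rcases le_or_gt 0 (g k (x (t + 1))) with h | h
      · exact le_trans (add_nonneg (ih k) h) (le_max_right _ _)
      · exact le_trans (by linarith) (le_max_left _ _)
  -- partial sums of g bounded by Q
  have hsum : ∀ t k, ∑ τ ∈ Finset.range t, g k (x (τ + 1)) ≤ Q t k := by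
    intro t
    induction t with
    | zero => intro k; simpa using hQnn 0 k
    | succ t ih =>
      intro k
      rw [Finset.sum_range_succ, hQr]
      exact le_trans (by linarith [ih k]) (le_max_right _ _)
  -- duality lower bound
  have hdual : ∀ z ∈ X, f xstar ≤ f z + ∑ k, lam k * g k z := fun z hz =>
    hduality.1 ⟨z, hz, rfl⟩
  intro t ht
  have h1 : (t : ℝ) * f xstar ≤ ∑ τ ∈ Finset.range t, f (x (τ + 1)) +
      ∑ k, lam k * Q t k := by
    have h2 : (t : ℝ) * f xstar ≤
        ∑ τ ∈ Finset.range t, (f (x (τ + 1)) + ∑ k, lam k * g k (x (τ + 1))) := by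
      calc (t : ℝ) * f xstar = ∑ τ ∈ Finset.range t, f xstar := by
            simp [mul_comm]
        _ ≤ _ := Finset.sum_le_sum fun τ _ => hdual _ (hx (τ + 1))
    rw [Finset.sum_add_distrib, Finset.sum_comm] at h2
    refine h2.trans (add_le_add_right (Finset.sum_le_sum fun k _ => ?_) _)
    rw [← Finset.mul_sum]
    exact mul_le_mul_of_nonneg_left (hsum t k) (hlam k)
  have h3 : ∑ k, lam k * Q t k ≤ ‖lam‖ * ‖Q t‖ := by
    have := real_inner_le_norm lam (Q t)
    simpa only [PiLp.inner_apply, RCLike.inner_apply, conj_trivial, mul_comm] using this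
  linarith
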